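/- Fix r ≥ 1 and, for 0 ≤ k ≤ r−1, suppose the prolonged components satisfy φₖ⁽ᴶ⁺¹⁾ = Dφₖ⁽ᴶ⁾ − u⁽ᴶ⁺¹⁾ Dξₖ for all J (the finite-difference prolongation formula). Then for every 1 ≤ l ≤ r and every J, ∑_{i=1}^{l} (hⁱ/i!) [ Dⁱφ_{l−i}⁽ᴶ⁾ − φ_{l−i}⁽ᴶ⁺ⁱ⁾ − ∑_{n=1}^{i} C(i, n−1) u⁽ᴶ⁺ⁿ⁾ D^{i−n+1} ξ_{l−i} ] = 0 as a polynomial identity in h. Conversely, if these identities hold for all 1 ≤ l ≤ r (for all h), then φₖ⁽ᴶ⁺¹⁾ = Dφₖ⁽ᴶ⁾ − u⁽ᴶ⁺¹⁾Dξₖ for all 0 ≤ k ≤ r−1. -/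
import Mathlib


open Finset


lemma icc_to_range {A : Type*} [AddCommMonoid A] (m : ℕ) (f : ℕ → A) :
    ∑ n ∈ Finset.Icc 1 m, f n = ∑ j ∈ Finset.range m, f (j + 1) := by
  induction m with
  | zero => simp
  | succ m ih =>
    rw [Finset.sum_Icc_succ_top (by omega), Finset.sum_range_succ, ih]

lemma fd_aux {A : Type*} [CommRing A] [Algebra ℚ A]
    (D : Derivation ℚ A A) (u : ℕ → A)
    (hu : ∀ J : ℕ, D (u J) = u (J + 1))
    (φ : ℕ → A) (ξ : A)
    (h : ∀ J, φ (J + 1) = D (φ J) - u (J + 1) * D ξ) :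
    ∀ i J, (D.toLinearMap ^ i) (φ J) - φ (J + i)
      = ∑ n ∈ Finset.Icc 1 i, (i.choose (n - 1) : A) * u (J + n) *
          ((D.toLinearMap ^ (i - n + 1)) ξ) := by
  intro i
  induction i with
  | zero => intro J; simp
  | succ i ih =>
    intro J
    have key : (D.toLinearMap ^ (i+1)) (φ J) = D ((D.toLinearMap ^ i) (φ J)) := by
      rw [pow_succ']; rfl
    have hIH := ih J
    have step : (D.toLinearMap ^ (i+1)) (φ J) - φ (J + (i+1))
        = u (J + i + 1) * D ξ + D (∑ n ∈ Finset.Icc 1 i, (i.choose (n - 1) : A) * u (J + n) *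
            ((D.toLinearMap ^ (i - n + 1)) ξ)) := by
      have h2 : (D.toLinearMap ^ i) (φ J) = φ (J + i) + ∑ n ∈ Finset.Icc 1 i, (i.choose (n - 1) : A) * u (J + n) *
            ((D.toLinearMap ^ (i - n + 1)) ξ) := by linear_combination hIH
      rw [key, h2, map_add, show J + (i+1) = J + i + 1 by omega, h (J + i)]
      ring
    rw [step,
      icc_to_range i (fun n => (i.choose (n - 1) : A) * u (J + n) * ((D.toLinearMap ^ (i - n + 1)) ξ)),
      icc_to_range (i+1) (fun n => ((i+1).choose (n - 1) : A) * u (J + n) * ((D.toLinearMap ^ (i + 1 - n + 1)) ξ)),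
      map_sum]
    have hterm : ∀ j ∈ Finset.range i,
        D ((i.choose (j + 1 - 1) : A) * u (J + (j+1)) * ((D.toLinearMap ^ (i - (j+1) + 1)) ξ))
        = (i.choose j : A) * u (J + j + 1 + 1) * ((D.toLinearMap ^ (i - j)) ξ)
          + (i.choose j : A) * u (J + j + 1) * ((D.toLinearMap ^ (i - j + 1)) ξ) := by
      intro j hj
      rw [Finset.mem_range] at hj
      rw [show i - (j+1) + 1 = i - j by omega, show j + 1 - 1 = j by omega]
      have hDnat : D ((i.choose j : A)) = 0 := by simp
      have e3 : D ((D.toLinearMap ^ (i - j)) ξ) = (D.toLinearMap ^ (i - j + 1)) ξ := by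
        rw [pow_succ']; rfl
      rw [D.leibniz, D.leibniz, hDnat, hu (J + (j+1)), smul_eq_mul, smul_eq_mul, smul_eq_mul,
        e3, show J + (j+1) + 1 = J + j + 1 + 1 by omega, show J + (j+1) = J + j + 1 by omega,
        smul_zero, add_zero]
      ring
    rw [Finset.sum_congr rfl hterm, Finset.sum_add_distrib,
      Finset.sum_range_succ' (fun j => ((i+1).choose (j + 1 - 1) : A) * u (J + (j+1)) * ((D.toLinearMap ^ (i + 1 - (j+1) + 1)) ξ))]
    simp only [Nat.add_sub_cancel]
    have pascal : ∀ j ∈ Finset.range i,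
        ((i+1).choose (j + 1) : A) * u (J + (j + 1 + 1)) * ((D.toLinearMap ^ (i + 1 - (j + 1 + 1) + 1)) ξ)
        = (i.choose j : A) * u (J + j + 1 + 1) * ((D.toLinearMap ^ (i - j)) ξ)
          + (i.choose (j+1) : A) * u (J + j + 1 + 1) * ((D.toLinearMap ^ (i - j)) ξ) := by
      intro j hj
      rw [Finset.mem_range] at hj
      rw [show i + 1 - (j + 1 + 1) + 1 = i - j by omega, show J + (j + 1 + 1) = J + j + 1 + 1 by omega,
        Nat.choose_succ_succ i j]
      push_cast
      ring
    rw [Finset.sum_congr rfl pascal, Finset.sum_add_distrib]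
    have last : ∑ j ∈ Finset.range i, (i.choose (j+1) : A) * u (J + j + 1 + 1) * ((D.toLinearMap ^ (i - j)) ξ)
        = (∑ j ∈ Finset.range i, (i.choose j : A) * u (J + j + 1) * ((D.toLinearMap ^ (i - j + 1)) ξ))
          + u (J + i + 1) * D ξ - u (J + 1) * ((D.toLinearMap ^ (i + 1)) ξ) := by
      have h1 : ∑ j ∈ Finset.range (i+1), (i.choose j : A) * u (J + j + 1) * ((D.toLinearMap ^ (i - j + 1)) ξ)
          = (∑ j ∈ Finset.range i, (i.choose (j+1) : A) * u (J + j + 1 + 1) * ((D.toLinearMap ^ (i - j)) ξ))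
            + u (J + 1) * ((D.toLinearMap ^ (i + 1)) ξ) := by
        rw [Finset.sum_range_succ' (fun j => (i.choose j : A) * u (J + j + 1) * ((D.toLinearMap ^ (i - j + 1)) ξ))]
        simp only [Nat.choose_zero_right, Nat.cast_one, one_mul, Nat.sub_zero, zero_add]
        congr 1
        apply Finset.sum_congr rfl
        intro j hj
        rw [Finset.mem_range] at hj
        rw [show i - (j+1) + 1 = i - j by omega, show J + (j + 1) + 1 = J + j + 1 + 1 by omega]
      have h2 : ∑ j ∈ Finset.range (i+1), (i.choose j : A) * u (J + j + 1) * ((D.toLinearMap ^ (i - j + 1)) ξ)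
          = (∑ j ∈ Finset.range i, (i.choose j : A) * u (J + j + 1) * ((D.toLinearMap ^ (i - j + 1)) ξ))
            + u (J + i + 1) * D ξ := by
        rw [Finset.sum_range_succ]
        simp only [Nat.choose_self, Nat.cast_one, one_mul, Nat.sub_self, zero_add, pow_one,
          Derivation.coeFn_coe]
      linear_combination h2 - h1
    rw [last]
    rw [show J + (0 + 1) = J + 1 by omega]
    simp only [Nat.choose_zero_right, Nat.cast_one, one_mul]
    ring

/-- Equivalence between the finite-difference prolongation formulae
`φₖ⁽ᴶ⁺¹⁾ = Dφₖ⁽ᴶ⁾ − u⁽ᴶ⁺¹⁾Dξₖ` (for `0 ≤ k ≤ r−1`) and the polynomial identities in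
the step size `h` (eq:preliminary):
`∑_{i=1}^l (hⁱ/i!)[Dⁱφ_{l−i}⁽ᴶ⁾ − φ_{l−i}⁽ᴶ⁺ⁱ⁾ − ∑_{n=1}^i C(i,n−1)u⁽ᴶ⁺ⁿ⁾D^{i−n+1}ξ_{l−i}] = 0`
for `1 ≤ l ≤ r`, stated in `Polynomial A` with `h` as the indeterminate. -/
theorem fd_prolongation_iff_preliminary
    {A : Type*} [CommRing A] [Algebra ℚ A]
    (D : Derivation ℚ A A) (u : ℕ → A)
    (hu : ∀ J : ℕ, D (u J) = u (J + 1))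
    (r : ℕ) (hr : 1 ≤ r)
    (φ : ℕ → ℕ → A) (ξ : ℕ → A) :
    (∀ k : ℕ, k ≤ r - 1 → ∀ J : ℕ,
        φ k (J + 1) = D (φ k J) - u (J + 1) * D (ξ k))
    ↔
    (∀ l ∈ Finset.Icc 1 r, ∀ J : ℕ,
        (∑ i ∈ Finset.Icc 1 l,
            (((Nat.factorial i : ℚ)⁻¹) • (Polynomial.X : Polynomial A) ^ i) *
              Polynomial.C
                ((D.toLinearMap ^ i) (φ (l - i) J) - φ (l - i) (J + i)
                  - ∑ n ∈ Finset.Icc 1 i,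
                      (i.choose (n - 1) : A) * u (J + n) *
                        ((D.toLinearMap ^ (i - n + 1)) (ξ (l - i))))
          = 0)) := by
  constructor
  · intro hpf l hl J
    rw [Finset.mem_Icc] at hl
    apply Finset.sum_eq_zero
    intro i hi
    rw [Finset.mem_Icc] at hi
    have hk : l - i ≤ r - 1 := by omega
    have := fd_aux D u hu (φ (l - i)) (ξ (l - i)) (hpf (l - i) hk) i J
    rw [show (D.toLinearMap ^ i) (φ (l - i) J) - φ (l - i) (J + i)
          - ∑ n ∈ Finset.Icc 1 i, (i.choose (n - 1) : A) * u (J + n) *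
              ((D.toLinearMap ^ (i - n + 1)) (ξ (l - i))) = 0 by linear_combination this]
    simp
  · intro hpoly k hk J
    have hmem : k + 1 ∈ Finset.Icc 1 r := by rw [Finset.mem_Icc]; omega
    have H := congrArg (fun p => Polynomial.coeff p 1) (hpoly (k + 1) hmem J)
    simp only [Polynomial.finset_sum_coeff, Polynomial.coeff_zero] at H
    have hco : ∀ i ∈ Finset.Icc 1 (k + 1),
        Polynomial.coeff ((((Nat.factorial i : ℚ)⁻¹) • (Polynomial.X : Polynomial A) ^ i) *
          Polynomial.C
            ((D.toLinearMap ^ i) (φ (k + 1 - i) J) - φ (k + 1 - i) (J + i)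
              - ∑ n ∈ Finset.Icc 1 i, (i.choose (n - 1) : A) * u (J + n) *
                  ((D.toLinearMap ^ (i - n + 1)) (ξ (k + 1 - i))))) 1
        = if i = 1 then
            (D (φ k J) - φ k (J + 1) - u (J + 1) * D (ξ k)) else 0 := by
      intro i hi
      rw [Finset.mem_Icc] at hi
      rw [smul_mul_assoc, Polynomial.coeff_smul,
        mul_comm ((Polynomial.X : Polynomial A) ^ i), Polynomial.coeff_C_mul,
        Polynomial.coeff_X_pow]
      by_cases hi1 : i = 1
      · subst hi1
        simp only [if_pos rfl, mul_one, Nat.factorial_one, Nat.cast_one, inv_one, one_smul,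
          Nat.add_sub_cancel, pow_one, Finset.Icc_self, Finset.sum_singleton,
          Nat.choose_self, Derivation.coeFn_coe]
        norm_num
      · rw [if_neg (by omega), if_neg hi1, mul_zero, smul_zero]
    rw [Finset.sum_congr rfl hco, Finset.sum_ite_eq' (Finset.Icc 1 (k+1)) 1
      (fun _ => D (φ k J) - φ k (J + 1) - u (J + 1) * D (ξ k))] at H
    rw [if_pos (by rw [Finset.mem_Icc]; omega)] at H
    linear_combination -H
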